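/- A vector x ∈ ℝ^N minimizes F if and only if for every k ∈ {1,…,N} the following component-wise conditions hold: if x_k ≠ 0 then (Aᵀ(b − Ax))_k = λ_k · sgn(x_k) · q_k · |x_k|^{q_k − 1}; if x_k = 0 and q_k > 1 then (Aᵀ(b − Ax))_k = 0; and if x_k = 0 and q_k = 1 then |(Aᵀ(b − Ax))_k| ≤ λ_k. -/

import Mathlib

open Finset Filter Matrix Topology

/-- Squared Euclidean residual plus generalized sparsity penalty:
`F(x) = ‖Ax - b‖₂² + 2 ∑ₖ λₖ |xₖ|^{qₖ}`. -/
noncomputable def Ffun {M N : ℕ} (A : Matrix (Fin M) (Fin N) ℝ) (b : Fin M → ℝ)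
    (lam q : Fin N → ℝ) (x : Fin N → ℝ) : ℝ :=
  (∑ i, (A.mulVec x i - b i) ^ 2) + 2 * ∑ k, lam k * |x k| ^ (q k)

/-- The surrogate functional `G(x,a,w,ε)`. -/
noncomputable def Gfun {M N : ℕ} (A : Matrix (Fin M) (Fin N) ℝ) (b : Fin M → ℝ)
    (lam q : Fin N → ℝ) (x a w : Fin N → ℝ) (ε : ℝ) : ℝ :=
  (∑ i, (A.mulVec x i - b i) ^ 2) - (∑ i, (A.mulVec (x - a) i) ^ 2)
    + (∑ k, (x k - a k) ^ 2)
    + ∑ k ∈ Finset.univ.filter (fun k => 1 ≤ q k ∧ q k < 2),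
        lam k * (q k * w k * ((x k) ^ 2 + ε ^ 2)
          + (2 - q k) * (w k) ^ (q k / (q k - 2)))
    + ∑ k ∈ Finset.univ.filter (fun k => q k = 2),
        2 * lam k * ((x k) ^ 2 + ε ^ 2) * ((w k) ^ 2 - 2 * w k + 2)

/-- Euclidean (ℓ²) norm on `Fin N → ℝ`. -/
noncomputable def l2 {N : ℕ} (v : Fin N → ℝ) : ℝ :=
  Real.sqrt (∑ k, (v k) ^ 2)

/-- Spectral (ℓ² operator) norm of a matrix. -/
noncomputable def specNorm {M N : ℕ} (A : Matrix (Fin M) (Fin N) ℝ) : ℝ :=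
  ‖LinearMap.toContinuousLinearMap (Matrix.toEuclideanLin A)‖

/-! ### Auxiliary lemmas -/

/-- Bernoulli-based convexity (subgradient) inequality for `t ↦ |t|^p` at a positive point. -/
lemma key_ineq {a : ℝ} (ha : 0 < a) {p : ℝ} (hp : 1 ≤ p) (z : ℝ) :
    p * a ^ (p - 1) * (z - a) ≤ |z| ^ p - a ^ p := by
  have hz : (0:ℝ) ≤ |z| := abs_nonneg z
  have hs : (-1:ℝ) ≤ |z| / a - 1 := by
    have : 0 ≤ |z| / a := div_nonneg hz ha.le
    linarith
  have hB := one_add_mul_self_le_rpow_one_add hs hp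
  have h1 : 1 + (|z| / a - 1) = |z| / a := by ring
  rw [h1] at hB
  have h2 : (|z| / a) ^ p = |z| ^ p / a ^ p := Real.div_rpow hz ha.le p
  rw [h2] at hB
  have hap : 0 < a ^ p := Real.rpow_pos_of_pos ha p
  have hB' : (1 + p * (|z| / a - 1)) * a ^ p ≤ |z| ^ p := by
    calc (1 + p * (|z| / a - 1)) * a ^ p ≤ (|z| ^ p / a ^ p) * a ^ p :=
          mul_le_mul_of_nonneg_right hB hap.le
      _ = |z| ^ p := by field_simp
  have hpow : a ^ p / a = a ^ (p - 1) := by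
    rw [Real.rpow_sub ha, Real.rpow_one]
  have hexp : (1 + p * (|z| / a - 1)) * a ^ p = a ^ p + p * (a ^ p / a) * (|z| - a) := by
    field_simp
  rw [hexp, hpow] at hB'
  have hnn : 0 ≤ p * a ^ (p - 1) := mul_nonneg (by linarith) (Real.rpow_nonneg ha.le _)
  have hz2 : z - a ≤ |z| - a := by have := le_abs_self z; linarith
  calc p * a ^ (p - 1) * (z - a) ≤ p * a ^ (p - 1) * (|z| - a) :=
        mul_le_mul_of_nonneg_left hz2 hnn
    _ ≤ |z| ^ p - a ^ p := by linarith

lemma rpow_split {t q : ℝ} (ht : 0 < t) : t * t ^ (q - 1) = t ^ q := by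
  have ha : (1:ℝ) + (q - 1) = q := by ring
  have h2 := Real.rpow_add ht 1 (q - 1)
  rw [ha, Real.rpow_one] at h2
  exact h2.symm

/-- One-sided limit argument extracting first-order information at `0`. -/
lemma lim_helper {c r lam q : ℝ} (hq : 1 ≤ q)
    (h : ∀ t : ℝ, 0 < t → 0 ≤ t ^ 2 * c - 2 * t * r + 2 * lam * t ^ q) :
    r ≤ lam * (0:ℝ) ^ (q - 1) := by
  have hT : Tendsto (fun t : ℝ => t * c - 2 * r + 2 * lam * t ^ (q - 1))
      (𝓝[>] (0:ℝ)) (𝓝 ((0:ℝ) * c - 2 * r + 2 * lam * (0:ℝ) ^ (q - 1))) := by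
    have h1 : Tendsto (fun t : ℝ => t ^ (q - 1)) (𝓝[>] (0:ℝ)) (𝓝 ((0:ℝ) ^ (q - 1))) :=
      (Real.continuousAt_rpow_const 0 (q - 1) (Or.inr (by linarith))).tendsto.mono_left
        nhdsWithin_le_nhds
    have h2 : Tendsto (fun t : ℝ => t) (𝓝[>] (0:ℝ)) (𝓝 0) :=
      tendsto_nhdsWithin_of_tendsto_nhds tendsto_id
    exact ((h2.mul_const c).sub tendsto_const_nhds).add (tendsto_const_nhds.mul h1)
  have hev : ∀ᶠ t in 𝓝[>] (0:ℝ), 0 ≤ t * c - 2 * r + 2 * lam * t ^ (q - 1) := by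
    filter_upwards [self_mem_nhdsWithin] with t ht
    have ht : (0:ℝ) < t := ht
    have key : t * (t * c - 2 * r + 2 * lam * t ^ (q - 1))
        = t ^ 2 * c - 2 * t * r + 2 * lam * t ^ q := by
      calc t * (t * c - 2 * r + 2 * lam * t ^ (q - 1))
          = t * (t * c - 2 * r) + 2 * lam * (t * t ^ (q - 1)) := by ring
        _ = t ^ 2 * c - 2 * t * r + 2 * lam * t ^ q := by rw [rpow_split ht]; ring
    nlinarith [h t ht]
  have := ge_of_tendsto hT hev
  nlinarith [this]

/-- Derivative of `t ↦ |a + t|^p` at `0` for `a ≠ 0`. -/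
lemma abs_deriv {a p : ℝ} (ha : a ≠ 0) (hp : 1 ≤ p) :
    HasDerivAt (fun t : ℝ => |a + t| ^ p) (Real.sign a * (p * |a| ^ (p - 1))) 0 := by
  rcases ha.lt_or_gt with hneg | hpos
  · have hinner : HasDerivAt (fun t : ℝ => -(a + t)) (-1) 0 := by
      exact ((hasDerivAt_id (0:ℝ)).const_add a).neg
    have houter := hinner.rpow_const (p := p) (Or.inr hp)
    have hev : (fun t : ℝ => |a + t| ^ p) =ᶠ[𝓝 (0:ℝ)] (fun t => (-(a + t)) ^ p) := by
      filter_upwards [Metric.ball_mem_nhds (0:ℝ) (show (0:ℝ) < -a by linarith)] with t ht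
      rw [Metric.mem_ball, Real.dist_eq, sub_zero] at ht
      have : a + t < 0 := by
        have := abs_lt.mp ht
        linarith [this.2]
      rw [abs_of_neg this]
    have hres := houter.congr_of_eventuallyEq hev
    refine hres.congr_deriv ?_
    rw [Real.sign_of_neg hneg, abs_of_neg hneg]
    ring_nf
  · have hinner : HasDerivAt (fun t : ℝ => a + t) 1 0 := (hasDerivAt_id (0:ℝ)).const_add a
    have houter := hinner.rpow_const (p := p) (Or.inr hp)
    have hev : (fun t : ℝ => |a + t| ^ p) =ᶠ[𝓝 (0:ℝ)] (fun t => (a + t) ^ p) := by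
      filter_upwards [Metric.ball_mem_nhds (0:ℝ) hpos] with t ht
      rw [Metric.mem_ball, Real.dist_eq, sub_zero] at ht
      have : 0 < a + t := by
        have := abs_lt.mp ht
        linarith [this.1]
      rw [abs_of_pos this]
    have hres := houter.congr_of_eventuallyEq hev
    refine hres.congr_deriv ?_
    rw [Real.sign_of_pos hpos, abs_of_pos hpos]
    ring_nf

/-- The component-wise optimality conditions give the subgradient inequality. -/
lemma subgrad {lamk qk r a : ℝ} (hlam : 0 < lamk) (hq1 : 1 ≤ qk)
    (h1 : a ≠ 0 → r = lamk * Real.sign a * qk * |a| ^ (qk - 1))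
    (h2 : a = 0 → 1 < qk → r = 0)
    (h3 : a = 0 → qk = 1 → |r| ≤ lamk) (z : ℝ) :
    r * (z - a) ≤ lamk * (|z| ^ qk - |a| ^ qk) := by
  rcases eq_or_ne a 0 with rfl | ha
  · rw [abs_zero, Real.zero_rpow (by linarith), sub_zero, sub_zero]
    rcases eq_or_lt_of_le hq1 with hq | hq
    · have h3' := h3 rfl hq.symm
      rw [← hq, Real.rpow_one]
      calc r * z ≤ |r * z| := le_abs_self _
        _ = |r| * |z| := abs_mul r z
        _ ≤ lamk * |z| := mul_le_mul_of_nonneg_right h3' (abs_nonneg z)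
    · rw [h2 rfl hq, zero_mul]
      positivity
  · have hr := h1 ha
    rcases ha.lt_or_gt with hneg | hpos
    · have hk := key_ineq (a := -a) (by linarith) hq1 (-z)
      rw [abs_neg] at hk
      rw [hr, Real.sign_of_neg hneg, abs_of_neg hneg]
      calc lamk * (-1) * qk * (-a) ^ (qk - 1) * (z - a)
          = lamk * (qk * (-a) ^ (qk - 1) * (-z - -a)) := by ring
        _ ≤ lamk * (|z| ^ qk - (-a) ^ qk) := by nlinarith [hk]
    · have hk := key_ineq hpos hq1 z
      rw [hr, Real.sign_of_pos hpos, abs_of_pos hpos]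
      calc lamk * 1 * qk * a ^ (qk - 1) * (z - a)
          = lamk * (qk * a ^ (qk - 1) * (z - a)) := by ring
        _ ≤ lamk * (|z| ^ qk - a ^ qk) := by nlinarith [hk]

lemma mulVec_update {M N : ℕ} (A : Matrix (Fin M) (Fin N) ℝ) (x : Fin N → ℝ)
    (k : Fin N) (v : ℝ) (i : Fin M) :
    A.mulVec (Function.update x k v) i = A.mulVec x i + A i k * (v - x k) := by
  simp only [Matrix.mulVec, dotProduct]
  have h1 : (fun j => A i j * Function.update x k v j)
      = Function.update (fun j => A i j * x j) k (A i k * v) := by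
    funext j
    by_cases hj : j = k
    · subst hj; simp
    · simp [Function.update_of_ne hj]
  rw [h1, Finset.sum_update_of_mem (Finset.mem_univ k),
    Finset.sum_eq_add_sum_sdiff_singleton_of_mem (Finset.mem_univ k) (fun j => A i j * x j)]
  ring

lemma pen_update {N : ℕ} (lam q x : Fin N → ℝ) (k : Fin N) (v : ℝ) :
    ∑ j, lam j * |Function.update x k v j| ^ (q j)
      = (∑ j, lam j * |x j| ^ (q j)) + lam k * (|v| ^ (q k) - |x k| ^ (q k)) := by
  have h1 : (fun j => lam j * |Function.update x k v j| ^ (q j))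
      = Function.update (fun j => lam j * |x j| ^ (q j)) k (lam k * |v| ^ (q k)) := by
    funext j
    by_cases hj : j = k
    · subst hj; simp
    · simp [Function.update_of_ne hj]
  rw [h1, Finset.sum_update_of_mem (Finset.mem_univ k),
    Finset.sum_eq_add_sum_sdiff_singleton_of_mem (Finset.mem_univ k)
      (fun j => lam j * |x j| ^ (q j))]
  ring

lemma resid_k {M N : ℕ} (A : Matrix (Fin M) (Fin N) ℝ) (b : Fin M → ℝ)
    (x : Fin N → ℝ) (k : Fin N) :
    Aᵀ.mulVec (b - A.mulVec x) k = ∑ i, A i k * (b i - A.mulVec x i) := by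
  simp [Matrix.mulVec, dotProduct, Matrix.transpose_apply]

/-- One-dimensional expansion of `F` along the `k`-th coordinate. -/
lemma expand {M N : ℕ} (A : Matrix (Fin M) (Fin N) ℝ) (b : Fin M → ℝ)
    (lam q : Fin N → ℝ) (x : Fin N → ℝ) (k : Fin N) (t : ℝ) :
    Ffun A b lam q (Function.update x k (x k + t))
      = Ffun A b lam q x + (t ^ 2 * (∑ i, (A i k) ^ 2)
          - 2 * t * (Aᵀ.mulVec (b - A.mulVec x) k)
          + 2 * lam k * (|x k + t| ^ (q k) - |x k| ^ (q k))) := by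
  unfold Ffun
  rw [pen_update]
  have h1 : ∀ i, (A.mulVec (Function.update x k (x k + t)) i - b i) ^ 2
      = (A.mulVec x i - b i) ^ 2 + 2 * t * (A i k * (A.mulVec x i - b i))
        + t ^ 2 * (A i k) ^ 2 := by
    intro i
    rw [mulVec_update]
    ring
  rw [Finset.sum_congr rfl (fun i _ => h1 i), Finset.sum_add_distrib,
    Finset.sum_add_distrib, ← Finset.mul_sum, ← Finset.mul_sum, resid_k]
  have h2 : ∑ i, A i k * (A.mulVec x i - b i) = -∑ i, A i k * (b i - A.mulVec x i) := by
    rw [← Finset.sum_neg_distrib]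
    exact Finset.sum_congr rfl (fun i _ => by ring)
  rw [h2]
  ring

/-- Full expansion of `F` around `x`. -/
lemma expand2 {M N : ℕ} (A : Matrix (Fin M) (Fin N) ℝ) (b : Fin M → ℝ)
    (lam q : Fin N → ℝ) (x y : Fin N → ℝ) :
    Ffun A b lam q y = Ffun A b lam q x + (∑ i, (A.mulVec (y - x) i) ^ 2)
      + 2 * ∑ k, (lam k * (|y k| ^ (q k) - |x k| ^ (q k))
          - (Aᵀ.mulVec (b - A.mulVec x) k) * (y k - x k)) := by
  unfold Ffun
  have hd : ∀ i, A.mulVec y i = A.mulVec x i + A.mulVec (y - x) i := by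
    intro i
    rw [Matrix.mulVec_sub]
    simp
  have h1 : ∀ i, (A.mulVec y i - b i) ^ 2
      = (A.mulVec x i - b i) ^ 2 + 2 * ((A.mulVec x i - b i) * A.mulVec (y - x) i)
        + (A.mulVec (y - x) i) ^ 2 := by
    intro i; rw [hd i]; ring
  rw [Finset.sum_congr rfl (fun i _ => h1 i), Finset.sum_add_distrib,
    Finset.sum_add_distrib, ← Finset.mul_sum]
  have hswap : ∑ i, (A.mulVec x i - b i) * A.mulVec (y - x) i
      = ∑ k, (-(Aᵀ.mulVec (b - A.mulVec x) k)) * (y k - x k) := by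
    have e1 : ∀ i, (A.mulVec x i - b i) * A.mulVec (y - x) i
        = ∑ k, (A i k * (A.mulVec x i - b i)) * (y k - x k) := by
      intro i
      rw [show A.mulVec (y - x) i = ∑ k, A i k * (y k - x k) by
        simp [Matrix.mulVec, dotProduct]]
      rw [Finset.mul_sum]
      exact Finset.sum_congr rfl (fun k _ => by ring)
    rw [Finset.sum_congr rfl (fun i _ => e1 i), Finset.sum_comm]
    refine Finset.sum_congr rfl (fun k _ => ?_)
    rw [resid_k]
    have h4 : ∑ i, A i k * (A.mulVec x i - b i) = -∑ i, A i k * (b i - A.mulVec x i) := by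
      rw [← Finset.sum_neg_distrib]
      exact Finset.sum_congr rfl (fun i _ => by ring)
    rw [← Finset.sum_mul, h4]
  rw [hswap]
  rw [Finset.sum_sub_distrib]
  have h2 : ∑ k, lam k * (|y k| ^ (q k) - |x k| ^ (q k))
      = (∑ k, lam k * |y k| ^ (q k)) - ∑ k, lam k * |x k| ^ (q k) := by
    rw [← Finset.sum_sub_distrib]
    exact Finset.sum_congr rfl (fun k _ => by ring)
  have h3 : ∑ k, (-(Aᵀ.mulVec (b - A.mulVec x) k)) * (y k - x k)
      = -∑ k, (Aᵀ.mulVec (b - A.mulVec x) k) * (y k - x k) := by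
    rw [← Finset.sum_neg_distrib]
    exact Finset.sum_congr rfl (fun k _ => by ring)
  rw [h2, h3]
  ring

/-- a vector `x` minimizes `F` iff the component-wise optimality
conditions hold. -/
theorem stmt_0 {M N : ℕ} (A : Matrix (Fin M) (Fin N) ℝ) (b : Fin M → ℝ)
    (lam q : Fin N → ℝ) (hlam : ∀ k, 0 < lam k)
    (hq : ∀ k, 1 ≤ q k ∧ q k ≤ 2) (x : Fin N → ℝ) :
    (∀ y : Fin N → ℝ, Ffun A b lam q x ≤ Ffun A b lam q y) ↔
      (∀ k : Fin N,
        (x k ≠ 0 →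
          Aᵀ.mulVec (b - A.mulVec x) k
            = lam k * Real.sign (x k) * q k * |x k| ^ (q k - 1)) ∧
        (x k = 0 → 1 < q k → Aᵀ.mulVec (b - A.mulVec x) k = 0) ∧
        (x k = 0 → q k = 1 → |Aᵀ.mulVec (b - A.mulVec x) k| ≤ lam k)) := by
  constructor
  · intro hmin k
    set r := Aᵀ.mulVec (b - A.mulVec x) k with hrdef
    set c := ∑ i, (A i k) ^ 2 with hcdef
    have hq1 := (hq k).1
    have hlamk := hlam k
    have hineq : ∀ t : ℝ, 0 ≤ t ^ 2 * c - 2 * t * r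
        + 2 * lam k * (|x k + t| ^ (q k) - |x k| ^ (q k)) := by
      intro t
      have h := hmin (Function.update x k (x k + t))
      rw [expand] at h
      linarith
    refine ⟨?_, ?_, ?_⟩
    · intro hxk
      have hloc : IsLocalMin (fun t : ℝ => t ^ 2 * c - 2 * t * r
          + 2 * lam k * |x k + t| ^ (q k)) 0 := by
        apply Filter.Eventually.of_forall
        intro t
        show (0:ℝ) ^ 2 * c - 2 * 0 * r + 2 * lam k * |x k + 0| ^ (q k)
            ≤ t ^ 2 * c - 2 * t * r + 2 * lam k * |x k + t| ^ (q k)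
        rw [add_zero]
        have := hineq t
        nlinarith [this]
      have d1 : HasDerivAt (fun t : ℝ => t ^ 2 * c) 0 0 := by
        simpa using (hasDerivAt_pow 2 (0:ℝ)).mul_const c
      have d2 : HasDerivAt (fun t : ℝ => 2 * t * r) (2 * r) 0 := by
        have := ((hasDerivAt_id (0:ℝ)).const_mul 2).mul_const r
        simpa [mul_assoc] using this
      have d3 := (abs_deriv hxk hq1).const_mul (2 * lam k)
      have hD := (d1.sub d2).add d3
      have h0 := hloc.hasDerivAt_eq_zero hD
      linear_combination (-(1:ℝ)/2) * h0
    · intro hx0 hq2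
      have hz : ∀ t : ℝ, 0 ≤ t ^ 2 * c - 2 * t * r + 2 * lam k * |t| ^ (q k) := by
        intro t
        have := hineq t
        rw [hx0, zero_add, abs_zero, Real.zero_rpow (by positivity)] at this
        linarith
      have hpos : ∀ t : ℝ, 0 < t → 0 ≤ t ^ 2 * c - 2 * t * r + 2 * lam k * t ^ (q k) := by
        intro t ht
        have := hz t
        rw [abs_of_pos ht] at this
        linarith
      have hneg : ∀ t : ℝ, 0 < t → 0 ≤ t ^ 2 * c - 2 * t * (-r) + 2 * lam k * t ^ (q k) := by
        intro t ht
        have := hz (-t)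
        rw [abs_neg, abs_of_pos ht] at this
        nlinarith [this]
      have h1 := lim_helper hq1 hpos
      have h2 := lim_helper hq1 hneg
      rw [Real.zero_rpow (ne_of_gt (by linarith : (0:ℝ) < q k - 1)), mul_zero] at h1 h2
      linarith
    · intro hx0 hq2
      have hz : ∀ t : ℝ, 0 ≤ t ^ 2 * c - 2 * t * r + 2 * lam k * |t| ^ (q k) := by
        intro t
        have := hineq t
        rw [hx0, zero_add, abs_zero, Real.zero_rpow (by positivity)] at this
        linarith
      have hpos : ∀ t : ℝ, 0 < t → 0 ≤ t ^ 2 * c - 2 * t * r + 2 * lam k * t ^ (q k) := by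
        intro t ht
        have := hz t
        rw [abs_of_pos ht] at this
        linarith
      have hneg : ∀ t : ℝ, 0 < t → 0 ≤ t ^ 2 * c - 2 * t * (-r) + 2 * lam k * t ^ (q k) := by
        intro t ht
        have := hz (-t)
        rw [abs_neg, abs_of_pos ht] at this
        nlinarith [this]
      have h1 := lim_helper hq1 hpos
      have h2 := lim_helper hq1 hneg
      have he : lam k * (0:ℝ) ^ (q k - 1) = lam k := by
        rw [hq2]
        norm_num
      rw [he] at h1 h2
      exact abs_le.mpr ⟨by linarith, h1⟩
  · intro hcond y
    have key : ∀ k, (Aᵀ.mulVec (b - A.mulVec x) k) * (y k - x k)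
        ≤ lam k * (|y k| ^ (q k) - |x k| ^ (q k)) := fun k =>
      subgrad (hlam k) (hq k).1 (hcond k).1 (hcond k).2.1 (hcond k).2.2 (y k)
    rw [expand2 A b lam q x y]
    have hsq : 0 ≤ ∑ i, (A.mulVec (y - x) i) ^ 2 :=
      Finset.sum_nonneg (fun i _ => sq_nonneg _)
    have hsum : 0 ≤ ∑ k, (lam k * (|y k| ^ (q k) - |x k| ^ (q k))
        - Aᵀ.mulVec (b - A.mulVec x) k * (y k - x k)) :=
      Finset.sum_nonneg (fun k _ => by linarith [key k])
    linarith
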